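/- arXiv:2009.02934 — 2 statements merged into one kernel-verified Lean document; each statement's English description precedes it below -/
import Mathlib

section
/- Let k ≥ 2 and let u : ℕ → A be a k-automatic infinite word over a finite alphabet A (i.e., the k-kernel of u is finite). If u contains only finitely many distinct palindromic factors, then the sequence PPL_u : ℕ → ℤ is k-regular. -/
/-- Prefix `u[0..n-1]` of the infinite word `u`. -/
def wordPrefix {A : Type*} (u : ℕ → A) (n : ℕ) : List A :=
  List.ofFn (fun i : Fin n => u i)

/-- Factor `u[i..i+ℓ-1]` of the infinite word `u`. -/
def wordFactor {A : Type*} (u : ℕ → A) (i ℓ : ℕ) : List A :=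
  List.ofFn (fun j : Fin ℓ => u (i + j))

/-- A palindrome is a word equal to its reversal. -/
def IsPalindrome {A : Type*} (w : List A) : Prop := w.reverse = w

/-- `w` is a concatenation of `k` nonempty palindromes. -/
def IsPalConcat {A : Type*} (w : List A) (k : ℕ) : Prop :=
  ∃ ps : List (List A), ps.length = k ∧ (∀ p ∈ ps, p ≠ [] ∧ IsPalindrome p) ∧ ps.flatten = w

/-- Prefix palindromic length: the least number of nonempty palindromes whose
concatenation is the prefix of length `n` of `u` (`PPL u 0 = 0`). -/
noncomputable def PPL {A : Type*} (u : ℕ → A) (n : ℕ) : ℕ :=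
  sInf {k | IsPalConcat (wordPrefix u n) k}

/-- The PPL-difference sequence `d_u(n) = PPL_u(n+1) - PPL_u(n)`. -/
noncomputable def PPLdiff {A : Type*} (u : ℕ → A) (n : ℕ) : ℤ :=
  (PPL u (n + 1) : ℤ) - (PPL u n : ℤ)

/-- The `k`-kernel of a sequence `x`: all subsequences `(x (k^e * n + b))_n` with `b < k^e`. -/
def kernelSeq {S : Type*} (k : ℕ) (x : ℕ → S) : Set (ℕ → S) :=
  {y | ∃ e b : ℕ, b < k ^ e ∧ y = fun n => x (k ^ e * n + b)}

namespace PPLAux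

set_option linter.unusedSectionVars false

/-! ### Generic kernel lemmas -/

lemma kernel_self {S : Type*} (k : ℕ) (x : ℕ → S) : x ∈ kernelSeq k x :=
  ⟨0, 0, by simp, by funext n; simp⟩

lemma kernel_comp_finite {S T : Type*} {k : ℕ} {x : ℕ → S} (hx : (kernelSeq k x).Finite)
    (f : S → T) : (kernelSeq k (fun n => f (x n))).Finite := by
  apply (hx.image (fun w => fun n => f (w n))).subset
  rintro y ⟨e, b, hb, rfl⟩
  exact ⟨fun n => x (k ^ e * n + b), ⟨e, b, hb, rfl⟩, rfl⟩

lemma kernel_pair_finite {S T : Type*} {k : ℕ} {x : ℕ → S} {y : ℕ → T}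
    (hx : (kernelSeq k x).Finite) (hy : (kernelSeq k y).Finite) :
    (kernelSeq k (fun n => (x n, y n))).Finite := by
  have : (Set.image2 (fun (w : ℕ → S) (v : ℕ → T) => fun n => (w n, v n))
      (kernelSeq k x) (kernelSeq k y)).Finite := hx.image2 _ hy
  apply this.subset
  rintro z ⟨e, b, hb, rfl⟩
  exact ⟨_, ⟨e, b, hb, rfl⟩, _, ⟨e, b, hb, rfl⟩, rfl⟩

/-! ### Prefix products over a finite monoid -/

variable {M : Type*} [Monoid M]

/-- `pprod s n = s (n-1) * ⋯ * s 1 * s 0`. -/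
def pprod (s : ℕ → M) : ℕ → M
  | 0 => 1
  | n + 1 => s n * pprod s n

/-- block product `blk s a b = s (a+b-1) * ⋯ * s a`. -/
def blk (s : ℕ → M) (a : ℕ) : ℕ → M
  | 0 => 1
  | b + 1 => s (a + b) * blk s a b

lemma pprod_add (s : ℕ → M) (a b : ℕ) : pprod s (a + b) = blk s a b * pprod s a := by
  induction b with
  | zero => simp [blk]
  | succ b ih => rw [← Nat.add_assoc, pprod, ih, blk, mul_assoc]

lemma pprod_mul (s : ℕ → M) (K : ℕ) (n : ℕ) :
    pprod s (K * n) = pprod (fun m => blk s (K * m) K) n := by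
  induction n with
  | zero => simp [pprod]
  | succ n ih => rw [Nat.mul_succ, pprod_add, pprod, ih]

variable [Finite M]

/-- evaluation of all kernel sequences of `s` at `n` -/
def ev {k : ℕ} (s : ℕ → M) (n : ℕ) : (kernelSeq k s) → M := fun w => (w : ℕ → M) n

lemma blk_factors {k : ℕ} (s : ℕ → M) (e : ℕ) :
    ∀ b : ℕ, b ≤ k ^ e → ∃ h : ((kernelSeq k s) → M) → M,
      ∀ n, blk s (k ^ e * n) b = h (ev (k := k) s n) := by
  intro b
  induction b with
  | zero => exact fun _ => ⟨fun _ => 1, fun n => rfl⟩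
  | succ b ih =>
    intro hb
    obtain ⟨h, hh⟩ := ih (Nat.le_of_succ_le hb)
    refine ⟨fun v => v ⟨fun m => s (k ^ e * m + b), ⟨e, b, hb, rfl⟩⟩ * h v, fun n => ?_⟩
    rw [blk, hh]
    rfl

/-- Key lemma: the kernel of the prefix-product sequence of an automatic sequence
over a finite monoid is finite. -/
theorem kernel_pprod_finite {k : ℕ} {s : ℕ → M} (hs : (kernelSeq k s).Finite) :
    (kernelSeq k (pprod s)).Finite := by
  haveI : Finite (kernelSeq k s) := hs.to_subtype
  -- candidate finite superset
  set V : Type _ := ((kernelSeq k s) → M)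
  have hbig : (Set.image2 (fun (g h : V → M) => fun n => g (ev (k := k) s n) *
      pprod (fun m => h (ev (k := k) s m)) n) Set.univ Set.univ).Finite :=
    Set.Finite.image2 _ (Set.finite_univ) (Set.finite_univ)
  apply hbig.subset
  rintro y ⟨e, b, hb, rfl⟩
  obtain ⟨hB, hhB⟩ := blk_factors (k := k) s e b (le_of_lt hb)
  obtain ⟨hF, hhF⟩ := blk_factors (k := k) s e (k ^ e) le_rfl
  refine ⟨hB, Set.mem_univ _, hF, Set.mem_univ _, ?_⟩
  funext n
  have h1 : pprod s (k ^ e * n + b) = blk s (k ^ e * n) b * pprod s (k ^ e * n) :=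
    pprod_add s _ b
  have h2 : pprod s (k ^ e * n) = pprod (fun m => hF (ev (k := k) s m)) n := by
    rw [pprod_mul s (k ^ e) n]
    congr 1
    funext m
    exact hhF m
  simp only [h1, h2, hhB n]

/-! ### Runs of finite automata -/

/-- state sequence of the automaton with transition `Φ` on input `a`. -/
def run {Γ Q : Type*} (Φ : Γ → Q → Q) (q0 : Q) (a : ℕ → Γ) : ℕ → Q
  | 0 => q0
  | n + 1 => Φ (a n) (run Φ q0 a n)

theorem kernel_run_finite {Γ Q : Type*} [Finite Q] {k : ℕ} {a : ℕ → Γ}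
    (ha : (kernelSeq k a).Finite) (Φ : Γ → Q → Q) (q0 : Q) :
    (kernelSeq k (run Φ q0 a)).Finite := by
  let s : ℕ → Function.End Q := fun n => Φ (a n)
  have hs : (kernelSeq k s).Finite := kernel_comp_finite ha Φ
  haveI : Finite (Function.End Q) := inferInstanceAs (Finite (Q → Q))
  have hP : (kernelSeq k (pprod s)).Finite := kernel_pprod_finite hs
  have hrun : ∀ n, run Φ q0 a n = (pprod s n) q0 := by
    intro n
    induction n with
    | zero => rfl
    | succ n ih => rw [run, pprod, ih]; rfl
  have heq : run Φ q0 a = fun n => (pprod s n) q0 := funext hrun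
  rw [heq]
  exact kernel_comp_finite hP (fun f => f q0)


/-! ### Partial sums -/

lemma sum_range_mul {K n : ℕ} (f : ℕ → ℤ) :
    ∑ m ∈ Finset.range (K * n), f m
      = ∑ i ∈ Finset.range n, ∑ r ∈ Finset.range K, f (K * i + r) := by
  induction n with
  | zero => simp
  | succ n ih =>
    rw [Nat.mul_succ, Finset.sum_range_add, ih, Finset.sum_range_succ]

/-- Partial sums of a sequence with finite `k`-kernel generate a f.g. `ℤ`-module. -/
theorem span_kernel_partialSum_fg {k : ℕ} {d : ℕ → ℤ} (hd : (kernelSeq k d).Finite)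
    (X : ℕ → ℤ) (hX : ∀ n, X n = ∑ m ∈ Finset.range n, d m) :
    (Submodule.span ℤ (kernelSeq k X)).FG := by
  classical
  set PS : (ℕ → ℤ) → (ℕ → ℤ) := fun w => fun n => ∑ m ∈ Finset.range n, w m with hPS
  set G : Set (ℕ → ℤ) := PS '' (kernelSeq k d) ∪ kernelSeq k d with hG
  have hGfin : G.Finite := (hd.image PS).union hd
  have hsub : kernelSeq k X ⊆ (Submodule.span ℤ G : Submodule ℤ (ℕ → ℤ)) := by
    rintro y ⟨e, b, hb, rfl⟩
    have hy : (fun n => X (k ^ e * n + b)) =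
        (∑ r ∈ Finset.range (k ^ e), PS (fun m => d (k ^ e * m + r)))
        + (∑ j ∈ Finset.range b, (fun m => d (k ^ e * m + j))) := by
      funext n
      simp only [Pi.add_apply, Finset.sum_apply, hX, Finset.sum_range_add, hPS]
      rw [sum_range_mul d, Finset.sum_comm]
    rw [hy]
    apply Submodule.add_mem
    · apply Submodule.sum_mem
      intro r hr
      apply Submodule.subset_span
      exact Or.inl ⟨fun m => d (k ^ e * m + r), ⟨e, r, Finset.mem_range.mp hr, rfl⟩, rfl⟩
    · apply Submodule.sum_mem
      intro j hj
      apply Submodule.subset_span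
      exact Or.inr ⟨e, j, lt_trans (Finset.mem_range.mp hj) hb, rfl⟩
  -- now conclude FG from being contained in a f.g. module
  have hle : Submodule.span ℤ (kernelSeq k X) ≤ Submodule.span ℤ G :=
    Submodule.span_le.mpr hsub
  set N := Submodule.span ℤ G with hN
  have hNfg : N.FG := ⟨hGfin.toFinset, by rw [Set.Finite.coe_toFinset]⟩
  haveI : IsNoetherian ℤ N := isNoetherian_of_fg_of_noetherian N hNfg
  have hfg : (Submodule.comap N.subtype (Submodule.span ℤ (kernelSeq k X))).FG :=
    IsNoetherian.noetherian _
  have hmap := hfg.map N.subtype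
  rwa [Submodule.map_comap_subtype, inf_eq_right.mpr hle] at hmap


/-! ### PPL combinatorics -/

open scoped Classical

variable {A : Type*}

@[simp] lemma wordPrefix_length (u : ℕ → A) (n : ℕ) : (wordPrefix u n).length = n := by
  simp [wordPrefix]

@[simp] lemma wordFactor_length (u : ℕ → A) (i ℓ : ℕ) : (wordFactor u i ℓ).length = ℓ := by
  simp [wordFactor]

lemma wordFactor_ne_nil (u : ℕ → A) (i : ℕ) {ℓ : ℕ} (hℓ : 1 ≤ ℓ) :
    wordFactor u i ℓ ≠ [] := by
  intro h
  have := congrArg List.length h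
  simp at this
  omega

lemma prefix_append (u : ℕ → A) {m n : ℕ} (h : m ≤ n) :
    wordPrefix u n = wordPrefix u m ++ wordFactor u m (n - m) := by
  apply List.ext_getElem
  · simp; omega
  · intro i h1 h2
    simp only [wordPrefix, wordFactor, List.getElem_append, List.getElem_ofFn,
      List.length_ofFn]
    split
    · rfl
    · congr 1; omega

lemma flatten_map_singleton (l : List A) : (l.map (fun a => [a])).flatten = l := by
  induction l with
  | nil => rfl
  | cons a l ih => simp [ih]

lemma palconcat_self (u : ℕ → A) (n : ℕ) : IsPalConcat (wordPrefix u n) n := by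
  refine ⟨(wordPrefix u n).map (fun a => [a]), by simp, ?_, flatten_map_singleton _⟩
  intro p hp
  simp only [List.mem_map] at hp
  obtain ⟨a, _, rfl⟩ := hp
  exact ⟨by simp, by simp [IsPalindrome]⟩

lemma PPL_setNonempty (u : ℕ → A) (n : ℕ) : {k | IsPalConcat (wordPrefix u n) k}.Nonempty :=
  ⟨n, palconcat_self u n⟩

lemma PPL_mem (u : ℕ → A) (n : ℕ) : IsPalConcat (wordPrefix u n) (PPL u n) :=
  Nat.sInf_mem (PPL_setNonempty u n)

lemma PPL_le (u : ℕ → A) {n m : ℕ} (h : IsPalConcat (wordPrefix u n) m) : PPL u n ≤ m :=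
  Nat.sInf_le h

@[simp] lemma PPL_zero (u : ℕ → A) : PPL u 0 = 0 := by
  have : IsPalConcat (wordPrefix u 0) 0 := ⟨[], rfl, by simp, by simp [wordPrefix]⟩
  exact Nat.le_zero.mp (PPL_le u this)

/-- The set of lengths of palindromic suffixes of the prefix of length `n`. -/
noncomputable def Sset (u : ℕ → A) (L n : ℕ) : Finset ℕ :=
  (Finset.Icc 1 (min n L)).filter (fun ℓ => IsPalindrome (wordFactor u (n - ℓ) ℓ))

lemma one_mem_Sset (u : ℕ → A) {L n : ℕ} (hL : 1 ≤ L) (hn : 1 ≤ n) :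
    1 ∈ Sset u L n := by
  refine Finset.mem_filter.mpr ⟨Finset.mem_Icc.mpr ⟨le_rfl, le_min hn hL⟩, ?_⟩
  show (wordFactor u (n - 1) 1).reverse = _
  simp [wordFactor, List.ofFn_succ]

lemma Sset_nonempty (u : ℕ → A) {L n : ℕ} (hL : 1 ≤ L) (hn : 1 ≤ n) :
    (Sset u L n).Nonempty := ⟨1, one_mem_Sset u hL hn⟩

/-- PPL is 1-Lipschitz upward: appending one letter adds at most one palindrome. -/
lemma PPL_succ_le (u : ℕ → A) (n : ℕ) : PPL u (n + 1) ≤ PPL u n + 1 := by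
  obtain ⟨ps, hlen, hpal, hflat⟩ := PPL_mem u n
  refine PPL_le u ⟨ps ++ [wordFactor u n 1], by simp [hlen], ?_, ?_⟩
  · intro p hp
    rcases List.mem_append.mp hp with h | h
    · exact hpal p h
    · simp only [List.mem_singleton] at h
      subst h
      constructor
      · exact wordFactor_ne_nil u n le_rfl
      · show (wordFactor u n 1).reverse = _
        simp [wordFactor, List.ofFn_succ]
  · rw [List.flatten_append, hflat]
    simp only [List.flatten, List.flatten_nil, List.append_nil]
    rw [prefix_append u (Nat.le_succ n)]
    congr 1
    simp

lemma PPL_add_le (u : ℕ → A) (n t : ℕ) : PPL u (n + t) ≤ PPL u n + t := by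
  induction t with
  | zero => simp
  | succ t ih => calc PPL u (n + (t+1)) = PPL u ((n+t) + 1) := by ring_nf
                  _ ≤ PPL u (n+t) + 1 := PPL_succ_le u _
                  _ ≤ PPL u n + (t+1) := by omega



lemma PPL_pos (u : ℕ → A) (n : ℕ) : 1 ≤ PPL u (n + 1) := by
  by_contra h
  have h0 : PPL u (n+1) = 0 := by omega
  obtain ⟨ps, hlen, _, hflat⟩ := PPL_mem u (n+1)
  rw [h0, List.length_eq_zero_iff] at hlen
  subst hlen
  have := congrArg List.length hflat
  simp at this

lemma PPL_succ_eq (u : ℕ → A) {L : ℕ} (hL : 1 ≤ L)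
    (hLpal : ∀ w : List A, w ≠ [] → IsPalindrome w →
      (∃ i, w = wordFactor u i w.length) → w.length ≤ L) (n : ℕ) :
    PPL u (n + 1) = 1 + (Sset u L (n + 1)).inf'
      (Sset_nonempty u hL (by omega)) (fun ℓ => PPL u (n + 1 - ℓ)) := by
  apply le_antisymm
  · obtain ⟨ℓ, hmem, heq⟩ := Finset.exists_mem_eq_inf' (Sset_nonempty u hL (n := n+1) (by omega))
      (fun ℓ => PPL u (n + 1 - ℓ))
    rw [heq]
    obtain ⟨hicc, hpalℓ⟩ := Finset.mem_filter.mp hmem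
    obtain ⟨h1, h2⟩ := Finset.mem_Icc.mp hicc
    have hn1 : ℓ ≤ n + 1 := le_trans h2 (min_le_left _ _)
    obtain ⟨ps, hlen, hpal, hflat⟩ := PPL_mem u (n + 1 - ℓ)
    refine PPL_le u ⟨ps ++ [wordFactor u (n + 1 - ℓ) ℓ], by simp [hlen, Nat.add_comm], ?_, ?_⟩
    · intro p hp
      rcases List.mem_append.mp hp with h | h
      · exact hpal p h
      · simp only [List.mem_singleton] at h
        subst h
        exact ⟨wordFactor_ne_nil u _ h1, hpalℓ⟩
    · rw [List.flatten_append, hflat]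
      simp only [List.flatten, List.flatten_nil, List.append_nil]
      rw [prefix_append u (Nat.sub_le (n+1) ℓ)]
      rw [show n + 1 - (n + 1 - ℓ) = ℓ by omega]
      exact congrArg _ (List.append_nil _)
  · obtain ⟨ps, hlen, hpal, hflat⟩ := PPL_mem u (n + 1)
    have hne : ps ≠ [] := by
      intro h; subst h
      have := congrArg List.length hflat
      simp at this
    set p := ps.getLast hne with hp
    have hsplit : ps = ps.dropLast ++ [p] := (List.dropLast_append_getLast hne).symm
    have hpmem : p ∈ ps := List.getLast_mem hne
    obtain ⟨hpne, hppal⟩ := hpal p hpmem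
    set ℓ := p.length with hℓ
    have hℓ1 : 1 ≤ ℓ := List.length_pos_iff.mpr hpne
    have hflt : ps.dropLast.flatten ++ p = wordPrefix u (n + 1) := by
      have h2 := congrArg List.flatten hsplit
      rw [List.flatten_append] at h2
      simp only [List.flatten_cons, List.flatten_nil, List.append_nil] at h2
      rw [← h2, hflat]
    have hlensum : ps.dropLast.flatten.length + ℓ = n + 1 := by
      have h := congrArg List.length hflt
      rw [List.length_append, wordPrefix_length] at h
      omega
    have hℓn : ℓ ≤ n + 1 := by omega
    have hpre : wordPrefix u (n + 1)
        = wordPrefix u (n + 1 - ℓ) ++ wordFactor u (n + 1 - ℓ) ℓ := by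
      have := prefix_append u (Nat.sub_le (n+1) ℓ)
      rwa [show n + 1 - (n + 1 - ℓ) = ℓ by omega] at this
    have hinj := List.append_inj (hflt.trans hpre) (by rw [wordPrefix_length]; omega)
    obtain ⟨hfd, hpfac⟩ := hinj
    have hℓL : ℓ ≤ L := by
      apply hLpal p hpne hppal
      exact ⟨n + 1 - ℓ, by rw [← hℓ]; exact hpfac⟩
    have hmem : ℓ ∈ Sset u L (n + 1) := by
      refine Finset.mem_filter.mpr ⟨Finset.mem_Icc.mpr ⟨hℓ1, le_min hℓn hℓL⟩, ?_⟩
      rw [← hpfac]; exact hppal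
    have hd : IsPalConcat (wordPrefix u (n + 1 - ℓ)) (ps.dropLast.length) :=
      ⟨ps.dropLast, rfl, fun q hq => hpal q (List.dropLast_subset ps hq), hfd⟩
    have h1 : PPL u (n + 1 - ℓ) ≤ ps.dropLast.length := PPL_le u hd
    have hdl : ps.dropLast.length = PPL u (n + 1) - 1 := by
      have h := congrArg List.length hsplit
      rw [List.length_append, List.length_singleton] at h
      omega
    have hinf : (Sset u L (n + 1)).inf' (Sset_nonempty u hL (by omega))
        (fun ℓ => PPL u (n + 1 - ℓ)) ≤ PPL u (n + 1) - 1 :=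
      le_trans (Finset.inf'_le _ hmem) (by omega)
    have := PPL_pos u n
    omega


/-! ### The profile state machine -/

section Machine

variable {A : Type*}

def getW (a0 : A) {L : ℕ} (win : Fin L → A) (t : ℕ) : A :=
  if h : t < L then win ⟨t, h⟩ else a0

def facOf (a0 : A) {L : ℕ} (win : Fin L → A) (ℓ : ℕ) : List A :=
  List.ofFn (fun j : Fin ℓ => getW a0 win (ℓ - 1 - (j : ℕ)))

noncomputable def SsetG (a0 : A) {L : ℕ} (γ : (Fin L → A) × ℕ) : Finset ℕ :=
  (Finset.Icc 1 (min (max 1 γ.2) L)).filter (fun ℓ => IsPalindrome (facOf a0 γ.1 ℓ))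

lemma SsetG_nonempty (a0 : A) {L : ℕ} (hL : 1 ≤ L) (γ : (Fin L → A) × ℕ) :
    (SsetG a0 γ).Nonempty := by
  refine ⟨1, Finset.mem_filter.mpr ⟨Finset.mem_Icc.mpr ⟨le_rfl, le_min (le_max_left _ _) hL⟩, ?_⟩⟩
  show (facOf a0 γ.1 1).reverse = _
  simp [facOf, List.ofFn_succ]

def enc (C : ℕ) (z : ℤ) : Fin (2 * C + 1) :=
  ⟨(max 0 (min (2 * C : ℤ) (z + C))).toNat, by
    have h1 : (max 0 (min (2 * C : ℤ) (z + C))) ≤ (2 * C : ℤ) :=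
      max_le (by positivity) (min_le_left _ _)
    have h2 := Int.toNat_le.mpr h1
    omega⟩

def dec (C : ℕ) (v : Fin (2 * C + 1)) : ℤ := (v : ℤ) - C

lemma dec_enc (C : ℕ) {z : ℤ} (h1 : -(C : ℤ) ≤ z) (h2 : z ≤ C) : dec C (enc C z) = z := by
  have hmin : min (2 * C : ℤ) (z + C) = z + C := min_eq_right (by omega)
  have hmax : max 0 (z + (C : ℤ)) = z + C := max_eq_right (by omega)
  simp only [dec, enc, hmin, hmax]
  rw [Int.toNat_of_nonneg (by omega)]
  omega

def vdec (C : ℕ) {L : ℕ} (q : Fin L → Fin (2 * C + 1)) (t : ℕ) : ℤ :=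
  if h : t < L then dec C (q ⟨t, h⟩) else 0

noncomputable def ddf (a0 : A) {L : ℕ} (hL : 1 ≤ L) (γ : (Fin L → A) × ℕ)
    (q : Fin L → Fin (2 * (L * L) + 1)) : ℤ :=
  1 - (SsetG a0 γ).sup' (SsetG_nonempty a0 hL γ) (fun ℓ => vdec (L * L) q (ℓ - 1))

noncomputable def Phi (a0 : A) {L : ℕ} (hL : 1 ≤ L) (γ : (Fin L → A) × ℕ)
    (q : Fin L → Fin (2 * (L * L) + 1)) : Fin L → Fin (2 * (L * L) + 1) :=
  fun j => if (j : ℕ) = 0 then enc (L * L) 0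
    else enc (L * L) (ddf a0 hL γ q + vdec (L * L) q ((j : ℕ) - 1))

def aSeq (u : ℕ → A) (L : ℕ) (n : ℕ) : (Fin L → A) × ℕ :=
  (fun i => u (n - (i : ℕ)), min (n + 1) L)

noncomputable def qs (u : ℕ → A) (a0 : A) {L : ℕ} (hL : 1 ≤ L) :
    ℕ → (Fin L → Fin (2 * (L * L) + 1)) :=
  run (Phi a0 hL) (fun _ => enc (L * L) 0) (aSeq u L)

/-- single-step lower bound on PPL -/
lemma PPL_succ_ge (u : ℕ → A) {L : ℕ} (hL : 1 ≤ L)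
    (hLpal : ∀ w : List A, w ≠ [] → IsPalindrome w →
      (∃ i, w = wordFactor u i w.length) → w.length ≤ L) (n : ℕ) :
    (PPL u n : ℤ) ≤ PPL u (n + 1) + ((L : ℤ) - 2) := by
  obtain ⟨ℓ, hmem, heq⟩ := Finset.exists_mem_eq_inf' (Sset_nonempty u hL (n := n + 1) (by omega))
    (fun ℓ => PPL u (n + 1 - ℓ))
  obtain ⟨hicc, _⟩ := Finset.mem_filter.mp hmem
  obtain ⟨h1, h2⟩ := Finset.mem_Icc.mp hicc
  have hn1 : ℓ ≤ n + 1 := le_trans h2 (min_le_left _ _)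
  have hL2 : ℓ ≤ L := le_trans h2 (min_le_right _ _)
  have hrec2 : PPL u (n + 1) = 1 + PPL u (n + 1 - ℓ) := by
    rw [PPL_succ_eq u hL hLpal n]
    exact congrArg (1 + ·) heq
  have hadd : PPL u n ≤ PPL u (n + 1 - ℓ) + (ℓ - 1) := by
    have := PPL_add_le u (n + 1 - ℓ) (ℓ - 1)
    rwa [show n + 1 - ℓ + (ℓ - 1) = n by omega] at this
  have h3 : (PPL u n : ℤ) ≤ PPL u (n + 1 - ℓ) + ((ℓ - 1 : ℕ) : ℤ) := by exact_mod_cast hadd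
  have hrec' : (PPL u (n + 1) : ℤ) = 1 + PPL u (n + 1 - ℓ) := by exact_mod_cast hrec2
  have hcast : ((ℓ - 1 : ℕ) : ℤ) = (ℓ : ℤ) - 1 := by omega
  rw [hcast] at h3
  have hLZ : (ℓ : ℤ) ≤ L := by exact_mod_cast hL2
  omega

lemma PPL_le_add_mul (u : ℕ → A) {L : ℕ} (hL : 1 ≤ L)
    (hLpal : ∀ w : List A, w ≠ [] → IsPalindrome w →
      (∃ i, w = wordFactor u i w.length) → w.length ≤ L) (m t : ℕ) :
    (PPL u m : ℤ) ≤ PPL u (m + t) + ((L : ℤ) - 2) * t := by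
  induction t with
  | zero => simp
  | succ t ih =>
    have h1 := PPL_succ_ge u hL hLpal (m + t)
    have h2 : (PPL u (m + t) : ℤ) ≤ PPL u (m + (t + 1)) + ((L : ℤ) - 2) := by
      rwa [show m + t + 1 = m + (t + 1) by omega] at h1
    push_cast
    push_cast at ih h2
    nlinarith

lemma pi_bound (u : ℕ → A) {L : ℕ} (hL : 1 ≤ L)
    (hLpal : ∀ w : List A, w ≠ [] → IsPalindrome w →
      (∃ i, w = wordFactor u i w.length) → w.length ≤ L) (n : ℕ) {j : ℕ} (hj : j ≤ L) :
    -((L : ℤ) * L) ≤ (PPL u n : ℤ) - PPL u (n - j) ∧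
      (PPL u n : ℤ) - PPL u (n - j) ≤ (L : ℤ) * L := by
  set t := n - (n - j) with ht
  have htj : t ≤ j := by omega
  have hnt : n = (n - j) + t := by omega
  have htL : (t : ℤ) ≤ L := by exact_mod_cast le_trans htj hj
  have ht0 : (0 : ℤ) ≤ t := by positivity
  have hL1 : (1 : ℤ) ≤ L := by exact_mod_cast hL
  constructor
  · have h1 := PPL_le_add_mul u hL hLpal (n - j) t
    rw [← hnt] at h1
    nlinarith
  · have h1 := PPL_add_le u (n - j) t
    rw [← hnt] at h1
    have h1' : (PPL u n : ℤ) ≤ PPL u (n - j) + t := by exact_mod_cast h1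
    nlinarith

lemma facOf_aSeq (u : ℕ → A) {L : ℕ} (a0 : A) (n : ℕ) {ℓ : ℕ} (h1 : 1 ≤ ℓ)
    (h2 : ℓ ≤ n + 1) (h3 : ℓ ≤ L) :
    facOf a0 (fun i : Fin L => u (n - (i : ℕ))) ℓ = wordFactor u (n + 1 - ℓ) ℓ := by
  apply List.ext_getElem
  · simp [facOf, wordFactor]
  · intro i hi1 hi2
    simp only [facOf, wordFactor, List.getElem_ofFn, List.length_ofFn] at hi1 hi2 ⊢
    have hlt : ℓ - 1 - i < L := by omega
    simp only [getW, dif_pos hlt]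
    congr 1
    omega

lemma SsetG_aSeq (u : ℕ → A) {L : ℕ} (a0 : A) (n : ℕ) :
    SsetG a0 (aSeq u L n) = Sset u L (n + 1) := by
  ext ℓ
  simp only [SsetG, Sset, Finset.mem_filter, Finset.mem_Icc]
  simp only [aSeq]
  constructor
  · rintro ⟨⟨ha, hb⟩, hc⟩
    have h2 : ℓ ≤ n + 1 := by omega
    have h3 : ℓ ≤ L := by omega
    refine ⟨⟨ha, by omega⟩, ?_⟩
    rwa [facOf_aSeq u a0 n ha h2 h3] at hc
  · rintro ⟨⟨ha, hb⟩, hc⟩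
    have h2 : ℓ ≤ n + 1 := by omega
    have h3 : ℓ ≤ L := by omega
    refine ⟨⟨ha, by omega⟩, ?_⟩
    rwa [facOf_aSeq u a0 n ha h2 h3]

lemma ddf_eq (u : ℕ → A) {L : ℕ} (a0 : A) (hL : 1 ≤ L)
    (hLpal : ∀ w : List A, w ≠ [] → IsPalindrome w →
      (∃ i, w = wordFactor u i w.length) → w.length ≤ L)
    (n : ℕ) (q : Fin L → Fin (2 * (L * L) + 1))
    (hq : ∀ j : Fin L, dec (L * L) (q j) = (PPL u n : ℤ) - PPL u (n - (j : ℕ))) :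
    ddf a0 hL (aSeq u L n) q = (PPL u (n + 1) : ℤ) - PPL u n := by
  have hSne : (Sset u L (n + 1)).Nonempty := Sset_nonempty u hL (by omega)
  have hval : ∀ ℓ ∈ Sset u L (n + 1),
      vdec (L * L) q (ℓ - 1) = (PPL u n : ℤ) - PPL u (n + 1 - ℓ) := by
    intro ℓ hℓ
    obtain ⟨hicc, _⟩ := Finset.mem_filter.mp hℓ
    obtain ⟨h1, h2⟩ := Finset.mem_Icc.mp hicc
    have hlt : ℓ - 1 < L := by omega
    rw [vdec, dif_pos hlt, hq ⟨ℓ - 1, hlt⟩]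
    have harg : n - ((⟨ℓ - 1, hlt⟩ : Fin L) : ℕ) = n + 1 - ℓ := by
      simp only [Fin.val_mk]
      omega
    rw [harg]
  have hsup : (SsetG a0 (aSeq u L n)).sup'
        (SsetG_nonempty a0 hL _) (fun ℓ => vdec (L * L) q (ℓ - 1))
      = (Sset u L (n + 1)).sup' hSne (fun ℓ => (PPL u n : ℤ) - PPL u (n + 1 - ℓ)) := by
    refine Finset.sup'_congr _ (SsetG_aSeq u a0 n) ?_
    intro ℓ hℓ
    exact hval ℓ (by rwa [← SsetG_aSeq u a0 n])
  rw [ddf, hsup]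
  obtain ⟨ℓ0, hmem0, heq0⟩ := Finset.exists_mem_eq_inf' hSne (fun ℓ => PPL u (n + 1 - ℓ))
  have hrec2 : PPL u (n + 1) = 1 + PPL u (n + 1 - ℓ0) := by
    rw [PPL_succ_eq u hL hLpal n]
    exact congrArg (1 + ·) heq0
  have hmax : (Sset u L (n + 1)).sup' hSne (fun ℓ => (PPL u n : ℤ) - PPL u (n + 1 - ℓ))
      = (PPL u n : ℤ) - PPL u (n + 1 - ℓ0) := by
    apply le_antisymm
    · apply Finset.sup'_le
      intro ℓ hℓ
      have hmin : PPL u (n + 1 - ℓ0) ≤ PPL u (n + 1 - ℓ) := heq0 ▸ Finset.inf'_le _ hℓ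
      have h5 : (PPL u (n + 1 - ℓ0) : ℤ) ≤ PPL u (n + 1 - ℓ) := by exact_mod_cast hmin
      omega
    · exact Finset.le_sup' (fun ℓ => (PPL u n : ℤ) - PPL u (n + 1 - ℓ)) hmem0
  rw [hmax]
  have h6 : (PPL u (n + 1) : ℤ) = 1 + PPL u (n + 1 - ℓ0) := by exact_mod_cast hrec2
  omega

lemma qs_correct (u : ℕ → A) {L : ℕ} (a0 : A) (hL : 1 ≤ L)
    (hLpal : ∀ w : List A, w ≠ [] → IsPalindrome w →
      (∃ i, w = wordFactor u i w.length) → w.length ≤ L) : ∀ n (j : Fin L),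
    dec (L * L) (qs u a0 hL n j) = (PPL u n : ℤ) - PPL u (n - (j : ℕ)) := by
  intro n
  induction n with
  | zero =>
    intro j
    show dec (L * L) (enc (L * L) 0) = _
    rw [dec_enc _ (by omega) (by omega)]
    simp
  | succ n ih =>
    intro j
    have hstep : qs u a0 hL (n + 1) j = Phi a0 hL (aSeq u L n) (qs u a0 hL n) j := rfl
    rw [hstep, Phi]
    by_cases hj : (j : ℕ) = 0
    · rw [if_pos hj, dec_enc _ (by omega) (by omega), hj]
      simp
    · rw [if_neg hj]
      have hdd : ddf a0 hL (aSeq u L n) (qs u a0 hL n)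
          = (PPL u (n + 1) : ℤ) - PPL u n := ddf_eq u a0 hL hLpal n _ ih
      have hlt : (j : ℕ) - 1 < L := by have := j.isLt; omega
      have hvd : vdec (L * L) (qs u a0 hL n) ((j : ℕ) - 1)
          = (PPL u n : ℤ) - PPL u (n - ((j : ℕ) - 1)) := by
        rw [vdec, dif_pos hlt, ih ⟨(j : ℕ) - 1, hlt⟩]
      rw [hdd, hvd]
      have harg : (PPL u (n + 1) : ℤ) - PPL u n + ((PPL u n : ℤ) - PPL u (n - ((j : ℕ) - 1)))
          = (PPL u (n + 1) : ℤ) - PPL u (n + 1 - (j : ℕ)) := by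
        rw [show n - ((j : ℕ) - 1) = n + 1 - (j : ℕ) by omega]
        ring
      rw [harg]
      have hjL : (j : ℕ) ≤ L := le_of_lt j.isLt
      obtain ⟨hb1, hb2⟩ := pi_bound u hL hLpal (n + 1) hjL
      exact dec_enc _ hb1 hb2

lemma PPLdiff_eq_ddf (u : ℕ → A) {L : ℕ} (a0 : A) (hL : 1 ≤ L)
    (hLpal : ∀ w : List A, w ≠ [] → IsPalindrome w →
      (∃ i, w = wordFactor u i w.length) → w.length ≤ L) (n : ℕ) :
    PPLdiff u n = ddf a0 hL (aSeq u L n) (qs u a0 hL n) := by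
  rw [PPLdiff, ddf_eq u a0 hL hLpal n _ (qs_correct u a0 hL hLpal n)]

end Machine

/-! ### Kernel finiteness of the input sequence -/

section Kernels

variable {A : Type*} {k : ℕ}

lemma kernel_cnt_finite (hk : 2 ≤ k) (L : ℕ) (hL : 1 ≤ L) :
    (kernelSeq k (fun n => min (n + 1) L)).Finite := by
  have hsub : kernelSeq k (fun n => min (n + 1) L) ⊆
      (fun g : Fin L → Fin (L + 1) =>
        fun n => if h : n < L then ((g ⟨n, h⟩ : ℕ)) else L) '' Set.univ := by
    rintro y ⟨e, b, hb, rfl⟩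
    refine ⟨fun i => ⟨min (k ^ e * (i : ℕ) + b + 1) L, by omega⟩, Set.mem_univ _, ?_⟩
    funext n
    by_cases h : n < L
    · simp only [dif_pos h]
    · simp only [dif_neg h]
      have hkpos : 1 ≤ k ^ e := Nat.one_le_pow _ _ (by omega)
      have hkn : n ≤ k ^ e * n := by
        calc n = 1 * n := (Nat.one_mul n).symm
        _ ≤ k ^ e * n := Nat.mul_le_mul_right n hkpos
      omega
  exact (Set.Finite.image _ Set.finite_univ).subset hsub

lemma kernel_window_finite [Finite A] (hk : 2 ≤ k) (u : ℕ → A)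
    (hu : (kernelSeq k u).Finite) (L : ℕ) (hL : 1 ≤ L) :
    (kernelSeq k (fun n => fun i : Fin L => u (n - (i : ℕ)))).Finite := by
  classical
  haveI : Finite ↥(kernelSeq k u) := hu.to_subtype
  set E : Set (ℕ → A) := (fun p : (Fin L → A) × (↥(kernelSeq k u)) × Fin (L + 1) =>
      fun n => if h : n < L then p.1 ⟨n, h⟩ else (p.2.1 : ℕ → A) (n - (p.2.2 : ℕ))) ''
      Set.univ with hE
  have hEfin : E.Finite := Set.Finite.image _ Set.finite_univ
  have hcov : ∀ e b c : ℕ, b < k ^ e → c < L → (fun n => u (k ^ e * n + b - c)) ∈ E := by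
    intro e b c hb hc
    have hkpos : 1 ≤ k ^ e := Nat.one_le_pow _ _ (by omega)
    obtain ⟨t, b', hb', ht, heq⟩ : ∃ t b', b' < k ^ e ∧ t ≤ L ∧
        ∀ n, L ≤ n → k ^ e * n + b - c = k ^ e * (n - t) + b' := by
      rcases le_or_gt c b with hcb | hbc
      · exact ⟨0, b - c, by omega, by omega, fun n hn => by rw [Nat.sub_zero]; omega⟩
      · have hδpos : 1 ≤ c - b := by omega
        have hδL : c - b < L := by omega
        obtain ⟨q, r, hdm, hrlt⟩ : ∃ q r, c - b = k ^ e * q + r ∧ r < k ^ e :=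
          ⟨(c - b) / k ^ e, (c - b) % k ^ e, (Nat.div_add_mod _ _).symm,
            Nat.mod_lt _ (by omega)⟩
        have hq2 : q ≤ k ^ e * q := by
          calc q = 1 * q := (Nat.one_mul q).symm
          _ ≤ k ^ e * q := Nat.mul_le_mul_right q hkpos
        by_cases hr0 : r = 0
        · refine ⟨q, 0, by omega, by omega, ?_⟩
          intro n hn
          have hqn : q ≤ n := by omega
          have hmul : k ^ e * (n - q) + k ^ e * q = k ^ e * n := by
            rw [← Nat.mul_add]
            congr 1
            omega
          have hkn : n ≤ k ^ e * n := by
            calc n = 1 * n := (Nat.one_mul n).symm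
            _ ≤ k ^ e * n := Nat.mul_le_mul_right n hkpos
          omega
        · refine ⟨q + 1, k ^ e - r, by omega, by omega, ?_⟩
          intro n hn
          have hqn : q + 1 ≤ n := by omega
          have hmul : k ^ e * (n - (q + 1)) + k ^ e * (q + 1) = k ^ e * n := by
            rw [← Nat.mul_add]
            congr 1
            omega
          have hmul2 : k ^ e * (q + 1) = k ^ e * q + k ^ e := by ring
          have hkn : n ≤ k ^ e * n := by
            calc n = 1 * n := (Nat.one_mul n).symm
            _ ≤ k ^ e * n := Nat.mul_le_mul_right n hkpos
          omega
    refine ⟨(fun i : Fin L => u (k ^ e * (i : ℕ) + b - c),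
      ⟨fun m => u (k ^ e * m + b'), ⟨e, b', hb', rfl⟩⟩, ⟨t, by omega⟩), Set.mem_univ _, ?_⟩
    funext n
    by_cases h : n < L
    · simp only [dif_pos h]
    · simp only [dif_neg h]
      rw [heq n (by omega)]
  haveI : Finite ↥E := hEfin.to_subtype
  have hsub : kernelSeq k (fun n => fun i : Fin L => u (n - (i : ℕ))) ⊆
      (fun F : Fin L → ↥E => fun n => fun i : Fin L => (F i : ℕ → A) n) '' Set.univ := by
    rintro y ⟨e, b, hb, rfl⟩
    refine ⟨fun i => ⟨fun n => u (k ^ e * n + b - (i : ℕ)), hcov e b (i : ℕ) hb i.isLt⟩,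
      Set.mem_univ _, rfl⟩
  exact (Set.Finite.image _ Set.finite_univ).subset hsub

lemma kernel_aSeq_finite [Finite A] (hk : 2 ≤ k) (u : ℕ → A)
    (hu : (kernelSeq k u).Finite) (L : ℕ) (hL : 1 ≤ L) :
    (kernelSeq k (aSeq u L)).Finite :=
  kernel_pair_finite (kernel_window_finite hk u hu L hL) (kernel_cnt_finite hk L hL)

lemma kernel_diff_finite [Finite A] (hk : 2 ≤ k) (u : ℕ → A)
    (hu : (kernelSeq k u).Finite) {L : ℕ} (a0 : A) (hL : 1 ≤ L)
    (hLpal : ∀ w : List A, w ≠ [] → IsPalindrome w →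
      (∃ i, w = wordFactor u i w.length) → w.length ≤ L) :
    (kernelSeq k (PPLdiff u)).Finite := by
  have hqs : (kernelSeq k (qs u a0 hL)).Finite :=
    kernel_run_finite (kernel_aSeq_finite hk u hu L hL) (Phi a0 hL) (fun _ => enc (L * L) 0)
  have hpair : (kernelSeq k (fun n => (aSeq u L n, qs u a0 hL n))).Finite :=
    kernel_pair_finite (kernel_aSeq_finite hk u hu L hL) hqs
  have hrw : PPLdiff u = fun n =>
      (fun p : ((Fin L → A) × ℕ) × (Fin L → Fin (2 * (L * L) + 1)) => ddf a0 hL p.1 p.2)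
        ((aSeq u L n, qs u a0 hL n)) :=
    funext (fun n => PPLdiff_eq_ddf u a0 hL hLpal n)
  rw [hrw]
  exact kernel_comp_finite hpair
    (fun p : ((Fin L → A) × ℕ) × (Fin L → Fin (2 * (L * L) + 1)) => ddf a0 hL p.1 p.2)

end Kernels

end PPLAux

/-- If `u` is a `k`-automatic word (`k ≥ 2`) over a finite alphabet containing only
finitely many distinct palindromic factors, then `PPL_u : ℕ → ℤ` is `k`-regular. -/
theorem ppl_regular_of_finitely_many_palindromes {A : Type*} [Finite A]
    (u : ℕ → A) (k : ℕ) (hk : 2 ≤ k)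
    (hu : (kernelSeq k u).Finite)
    (hpal : {w : List A | w ≠ [] ∧ IsPalindrome w ∧ ∃ i : ℕ, w = wordFactor u i w.length}.Finite) :
    (Submodule.span ℤ (kernelSeq k (fun n => (PPL u n : ℤ)))).FG := by
  classical
  set L : ℕ := max 1 (hpal.toFinset.sup List.length) with hLdef
  have hL : 1 ≤ L := le_max_left _ _
  have hLpal : ∀ w : List A, w ≠ [] → IsPalindrome w →
      (∃ i, w = wordFactor u i w.length) → w.length ≤ L := by
    intro w h1 h2 h3
    have hmem : w ∈ hpal.toFinset := hpal.mem_toFinset.mpr ⟨h1, h2, h3⟩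
    exact le_trans (Finset.le_sup (f := List.length) hmem) (le_max_right _ _)
  have hd : (kernelSeq k (PPLdiff u)).Finite :=
    PPLAux.kernel_diff_finite hk u hu (u 0) hL hLpal
  apply PPLAux.span_kernel_partialSum_fg hd
  intro n
  induction n with
  | zero => simp
  | succ n ih =>
    rw [Finset.sum_range_succ, ← ih, PPLdiff]
    ring
end

section
/- Let u : ℕ → A and v : ℕ → A be infinite words all of whose palindromic factors have length at most p. Let m, m' ≥ 0 and let ℓ ≥ p. Suppose d_u(m+i) = d_v(m'+i) for all 0 ≤ i < p, and u[m+i] = v[m'+i] for all 0 ≤ i ≤ ℓ. Then d_u(m+ℓ) = d_v(m'+ℓ). (In other words, d_u(n) for n ≥ m + p is uniquely determined by d_u(m), …, d_u(m+p−1) and by the factor u[m]⋯u[n], without knowledge of PPL_u(m).) -/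
section aux
variable {A : Type*}

lemma wordPrefix_length (u : ℕ → A) (n : ℕ) : (wordPrefix u n).length = n := by
  simp [wordPrefix]

lemma wordFactor_length (u : ℕ → A) (i t : ℕ) : (wordFactor u i t).length = t := by
  simp [wordFactor]

lemma wordPrefix_add (u : ℕ → A) (a b : ℕ) :
    wordPrefix u (a + b) = wordPrefix u a ++ wordFactor u a b := by
  unfold wordPrefix wordFactor
  rw [List.ofFn_add]
  congr 1

lemma palConcat_self (u : ℕ → A) (n : ℕ) : IsPalConcat (wordPrefix u n) n := by
  refine ⟨(wordPrefix u n).map (fun a => [a]), by simp [wordPrefix], ?_, ?_⟩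
  · intro q hq
    simp only [List.mem_map] at hq
    obtain ⟨a, _, rfl⟩ := hq
    exact ⟨by simp, by simp [IsPalindrome]⟩
  · induction (wordPrefix u n) with
    | nil => simp
    | cons a l ih => simp [ih]

lemma ppl_mem (u : ℕ → A) (n : ℕ) : IsPalConcat (wordPrefix u n) (PPL u n) :=
  by
  have : {k | IsPalConcat (wordPrefix u n) k}.Nonempty := ⟨n, palConcat_self u n⟩
  exact Nat.sInf_mem this

lemma ppl_le (u : ℕ → A) {n k : ℕ} (h : IsPalConcat (wordPrefix u n) k) : PPL u n ≤ k :=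
  Nat.sInf_le h

lemma ppl_step_le (u : ℕ → A) {n t : ℕ} (ht1 : 1 ≤ t) (htn : t ≤ n)
    (hpal : IsPalindrome (wordFactor u (n - t) t)) : PPL u n ≤ PPL u (n - t) + 1 := by
  obtain ⟨ps, hlen, hall, hflat⟩ := ppl_mem u (n - t)
  apply ppl_le
  refine ⟨ps ++ [wordFactor u (n - t) t], by simp [hlen], ?_, ?_⟩
  · intro q hq
    rcases List.mem_append.mp hq with h | h
    · exact hall q h
    · simp only [List.mem_singleton] at h
      subst h
      constructor
      · intro hnil
        have := wordFactor_length u (n - t) t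
        rw [hnil] at this
        simp at this
        omega
      · exact hpal
  · rw [List.flatten_append, hflat]
    simp
    rw [← wordPrefix_add]
    congr 1
    omega

lemma ppl_step_exists (u : ℕ → A) {n : ℕ} (hn : 1 ≤ n) :
    ∃ t, 1 ≤ t ∧ t ≤ n ∧ IsPalindrome (wordFactor u (n - t) t) ∧
      PPL u n = PPL u (n - t) + 1 := by
  obtain ⟨ps, hlen, hall, hflat⟩ := ppl_mem u n
  have hne : ps ≠ [] := by
    intro h
    subst h
    have := congrArg List.length hflat
    simp [wordPrefix_length] at this
    omega
  obtain ⟨ps', q, rfl⟩ := (List.eq_nil_or_concat ps).resolve_left hne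
  rw [List.concat_eq_append] at hlen hall hflat
  set t := q.length with htdef
  have hq := hall q (by simp)
  have ht1 : 1 ≤ t := by
    rcases q with _ | _
    · exact absurd rfl hq.1
    · simp [htdef]
  have hflatlen : ps'.flatten.length + t = n := by
    have := congrArg List.length hflat
    simpa [wordPrefix_length] using this
  have htn : t ≤ n := by omega
  have hpref : wordPrefix u n = wordPrefix u (n - t) ++ wordFactor u (n - t) t := by
    rw [← wordPrefix_add]; congr 1; omega
  rw [hpref] at hflat
  rw [List.flatten_append] at hflat
  simp at hflat
  have hqlen : q.length = (wordFactor u (n - t) t).length := by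
    simp [wordFactor_length, htdef]
  obtain ⟨h1, h2⟩ := List.append_inj' hflat (by simpa using hqlen)
  refine ⟨t, ht1, htn, by rw [← h2]; exact hq.2, ?_⟩
  have hle1 : PPL u n ≤ PPL u (n - t) + 1 := ppl_step_le u ht1 htn (by rw [← h2]; exact hq.2)
  have hle2 : PPL u (n - t) ≤ ps'.length := ppl_le u ⟨ps', rfl, fun r hr => hall r (by simp [hr]), h1⟩
  have : ps'.length + 1 = PPL u n := by simpa using hlen
  omega
end aux

/-- Let `u` and `v` be infinite words all of whose palindromic factors have length at
most `p`, and let `ℓ ≥ p`. If the PPL-differences agree at `m + i` and `m' + i` for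
`0 ≤ i < p`, and `u[m+i] = v[m'+i]` for `0 ≤ i ≤ ℓ`, then
`d_u(m + ℓ) = d_v(m' + ℓ)`. -/
theorem ppl_diff_determined {A : Type*} (u v : ℕ → A) (p : ℕ)
    (hu : ∀ i ℓ : ℕ, 1 ≤ ℓ → IsPalindrome (wordFactor u i ℓ) → ℓ ≤ p)
    (hv : ∀ i ℓ : ℕ, 1 ≤ ℓ → IsPalindrome (wordFactor v i ℓ) → ℓ ≤ p)
    (m m' ℓ : ℕ) (hℓ : p ≤ ℓ)
    (hd : ∀ i : ℕ, i < p → PPLdiff u (m + i) = PPLdiff v (m' + i))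
    (hword : ∀ i : ℕ, i ≤ ℓ → u (m + i) = v (m' + i)) :
    PPLdiff u (m + ℓ) = PPLdiff v (m' + ℓ) := by
  
  suffices h : ∀ i, i ≤ ℓ + 1 → (PPL u (m + i) : ℤ) - PPL u m = (PPL v (m' + i) : ℤ) - PPL v m' by
    have h1 := h ℓ (by omega)
    have h2 := h (ℓ + 1) le_rfl
    rw [← Nat.add_assoc, ← Nat.add_assoc] at h2
    unfold PPLdiff
    omega
  intro i
  induction i using Nat.strong_induction_on with
  | _ i ih =>
    intro hi
    rcases Nat.eq_zero_or_pos i with rfl | h0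
    · simp
    rcases le_or_gt i p with hip | hip
    · have hih := ih (i - 1) (by omega) (by omega)
      have hdc := hd (i - 1) (by omega)
      unfold PPLdiff at hdc
      have e1 : m + (i - 1) + 1 = m + i := by omega
      have e2 : m' + (i - 1) + 1 = m' + i := by omega
      rw [e1, e2] at hdc
      omega
    · obtain ⟨t, ht1, htn, hpalu, hequ⟩ := ppl_step_exists u (n := m + i) (by omega)
      have htp : t ≤ p := hu _ t ht1 hpalu
      rw [show m + i - t = m + (i - t) by omega] at hpalu hequ
      obtain ⟨t', ht1', htn', hpalv, heqv⟩ := ppl_step_exists v (n := m' + i) (by omega)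
      have htp' : t' ≤ p := hv _ t' ht1' hpalv
      rw [show m' + i - t' = m' + (i - t') by omega] at hpalv heqv
      have hfac : ∀ s t0 : ℕ, s + t0 ≤ ℓ + 1 → wordFactor u (m + s) t0 = wordFactor v (m' + s) t0 := by
        intro s t0 hst
        unfold wordFactor
        congr 1
        funext j
        have e : m + s + (j : ℕ) = m + (s + j) := by omega
        rw [e, hword (s + j) (by omega), Nat.add_assoc]
      have hpv : IsPalindrome (wordFactor v (m' + (i - t)) t) := by
        rw [← hfac (i - t) t (by omega)]; exact hpalu
      have hpu : IsPalindrome (wordFactor u (m + (i - t')) t') := by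
        rw [hfac (i - t') t' (by omega)]; exact hpalv
      have hlv : PPL v (m' + i) ≤ PPL v (m' + (i - t)) + 1 := by
        have := ppl_step_le v (n := m' + i) (t := t) ht1 (by omega)
          (by rw [show m' + i - t = m' + (i - t) by omega]; exact hpv)
        rwa [show m' + i - t = m' + (i - t) by omega] at this
      have hlu : PPL u (m + i) ≤ PPL u (m + (i - t')) + 1 := by
        have := ppl_step_le u (n := m + i) (t := t') ht1' (by omega)
          (by rw [show m + i - t' = m + (i - t') by omega]; exact hpu)
        rwa [show m + i - t' = m + (i - t') by omega] at this
      have ih1 := ih (i - t) (by omega) (by omega)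
      have ih2 := ih (i - t') (by omega) (by omega)
      omega
end
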